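/- The asymptotic (small-threshold) behavior of the Fisher-Snedecor F CDF: for m, ms, γ̄ > 0, the CDF F(x) = ∫₀^x m^m (ms γ̄)^{ms} γ^{m−1}/(B(m,ms)(mγ + ms γ̄)^{m+ms}) dγ satisfies F(x) = (Γ(m+ms)/(Γ(ms)Γ(m+1)))·(m/(ms γ̄))^m · x^m · (1 + o(1)) as x → 0⁺; i.e., lim_{x→0⁺} F(x)/x^m = (Γ(m+ms)/(Γ(ms)Γ(m+1)))(m/(ms γ̄))^m. -/

import Mathlib

open MeasureTheory Real Set Filter

theorem fisher_cdf_asymptotics (m ms g : ℝ) (hm : 0 < m) (hms : 0 < ms) (hg : 0 < g) :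
    Tendsto
      (fun x : ℝ =>
        (∫ γ in Ioc (0:ℝ) x,
          m ^ m * (ms * g) ^ ms /
            (Real.Gamma m * Real.Gamma ms / Real.Gamma (m + ms)) *
            γ ^ (m - 1) / (m * γ + ms * g) ^ (m + ms)) / x ^ m)
      (nhdsWithin 0 (Ioi 0))
      (nhds (Real.Gamma (m + ms) / (Real.Gamma ms * Real.Gamma (m + 1)) *
        (m / (ms * g)) ^ m)) := by
  have hmsg : 0 < ms * g := mul_pos hms hg
  set c : ℝ := m ^ m * (ms * g) ^ ms / (Real.Gamma m * Real.Gamma ms / Real.Gamma (m + ms)) with hc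
  have hcpos : 0 < c := by
    apply div_pos (by positivity)
    exact div_pos (mul_pos (Real.Gamma_pos_of_pos hm) (Real.Gamma_pos_of_pos hms))
      (Real.Gamma_pos_of_pos (by linarith))
  have hconst : Real.Gamma (m + ms) / (Real.Gamma ms * Real.Gamma (m + 1)) * (m / (ms * g)) ^ m
      = c / (m * (ms * g) ^ (m + ms)) := by
    rw [hc, Real.Gamma_add_one hm.ne', Real.rpow_add hmsg, Real.div_rpow hm.le hmsg.le]
    have h1 : Real.Gamma m ≠ 0 := (Real.Gamma_pos_of_pos hm).ne'
    have h2 : Real.Gamma ms ≠ 0 := (Real.Gamma_pos_of_pos hms).ne'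
    have h3 : Real.Gamma (m+ms) ≠ 0 := (Real.Gamma_pos_of_pos (by linarith)).ne'
    have h4 : (ms*g) ^ m ≠ 0 := (Real.rpow_pos_of_pos hmsg m).ne'
    have h5 : (ms*g) ^ ms ≠ 0 := (Real.rpow_pos_of_pos hmsg ms).ne'
    have h6 : m ^ m ≠ 0 := (Real.rpow_pos_of_pos hm m).ne'
    field_simp
  rw [hconst]
  have hpow : ∀ x : ℝ, 0 < x → ∫ γ in Ioc (0:ℝ) x, γ ^ (m - 1) = x ^ m / m := by
    intro x hx
    rw [← _root_.intervalIntegral.integral_of_le hx.le,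
      integral_rpow (Or.inl (by linarith))]
    rw [Real.zero_rpow (by linarith : m - 1 + 1 ≠ 0)]
    ring_nf
  have hIbase : ∀ x : ℝ, 0 < x → IntegrableOn (fun γ : ℝ => γ ^ (m - 1)) (Ioc (0:ℝ) x) := by
    intro x hx
    have := (intervalIntegral.intervalIntegrable_rpow' (a := 0) (b := x) (r := m - 1)
      (by linarith))
    rwa [intervalIntegrable_iff_integrableOn_Ioc_of_le hx.le] at this
  have hIbaseIcc : ∀ x : ℝ, 0 < x → IntegrableOn (fun γ : ℝ => γ ^ (m - 1)) (Icc (0:ℝ) x) := by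
    intro x hx
    rw [integrableOn_Icc_iff_integrableOn_Ioc]
    exact hIbase x hx
  have hIf : ∀ x : ℝ, 0 < x →
      IntegrableOn (fun γ : ℝ => c * γ ^ (m - 1) / (m * γ + ms * g) ^ (m + ms)) (Ioc (0:ℝ) x) := by
    intro x hx
    have hcontd : ContinuousOn (fun γ : ℝ => c / (m * γ + ms * g) ^ (m + ms)) (Icc 0 x) := by
      apply continuousOn_const.div
      · apply ContinuousOn.rpow_const (by fun_prop)
        intro γ hγ
        exact Or.inl (by nlinarith [hγ.1])
      · intro γ hγ
        exact (Real.rpow_pos_of_pos (by nlinarith [hγ.1]) _).ne'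
    have h1 : IntegrableOn
        (fun γ : ℝ => c / (m * γ + ms * g) ^ (m + ms) * γ ^ (m - 1)) (Icc (0:ℝ) x) :=
      (hIbaseIcc x hx).continuousOn_mul hcontd isCompact_Icc
    have h2 : IntegrableOn (fun γ : ℝ => c / (m * γ + ms * g) ^ (m + ms) * γ ^ (m - 1))
        (Ioc (0:ℝ) x) := h1.mono_set Ioc_subset_Icc_self
    refine h2.congr_fun (fun γ _ => ?_) measurableSet_Ioc
    rw [mul_div_right_comm]
  have hIlo : ∀ x : ℝ, 0 < x →
      IntegrableOn (fun γ : ℝ => c * γ ^ (m - 1) / (m * x + ms * g) ^ (m + ms)) (Ioc (0:ℝ) x) := by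
    intro x hx
    have h1 : IntegrableOn
        (fun γ : ℝ => c / (m * x + ms * g) ^ (m + ms) * γ ^ (m - 1)) (Ioc (0:ℝ) x) :=
      (hIbase x hx).const_mul _
    refine h1.congr_fun (fun γ _ => ?_) measurableSet_Ioc
    rw [mul_div_right_comm]
  have hIhi : ∀ x : ℝ, 0 < x →
      IntegrableOn (fun γ : ℝ => c * γ ^ (m - 1) / (ms * g) ^ (m + ms)) (Ioc (0:ℝ) x) := by
    intro x hx
    have h1 : IntegrableOn
        (fun γ : ℝ => c / (ms * g) ^ (m + ms) * γ ^ (m - 1)) (Ioc (0:ℝ) x) :=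
      (hIbase x hx).const_mul _
    refine h1.congr_fun (fun γ _ => ?_) measurableSet_Ioc
    rw [mul_div_right_comm]
  have hevalc : ∀ x : ℝ, 0 < x → ∀ d : ℝ,
      (∫ γ in Ioc (0:ℝ) x, c * γ ^ (m - 1) / d) = c / d * (x ^ m / m) := by
    intro x hx d
    rw [← hpow x hx]
    rw [show (fun γ : ℝ => c * γ ^ (m - 1) / d) = fun γ : ℝ => c / d * γ ^ (m - 1) from
      funext fun γ => by rw [mul_div_right_comm]]
    exact integral_const_mul _ _
  have key : ∀ x : ℝ, 0 < x →
      c / (m * ((m * x + ms * g) ^ (m + ms))) ≤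
        (∫ γ in Ioc (0:ℝ) x, c * γ ^ (m - 1) / (m * γ + ms * g) ^ (m + ms)) / x ^ m ∧
      (∫ γ in Ioc (0:ℝ) x, c * γ ^ (m - 1) / (m * γ + ms * g) ^ (m + ms)) / x ^ m ≤
        c / (m * (ms * g) ^ (m + ms)) := by
    intro x hx
    have hxm : (0:ℝ) < x ^ m := Real.rpow_pos_of_pos hx m
    have hDx : (0:ℝ) < m * x + ms * g := by nlinarith
    have hDxp : (0:ℝ) < (m * x + ms * g) ^ (m + ms) := Real.rpow_pos_of_pos hDx _
    have hmsgp : (0:ℝ) < (ms * g) ^ (m + ms) := Real.rpow_pos_of_pos hmsg _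
    constructor
    · have hle : (∫ γ in Ioc (0:ℝ) x, c * γ ^ (m - 1) / (m * x + ms * g) ^ (m + ms)) ≤
          ∫ γ in Ioc (0:ℝ) x, c * γ ^ (m - 1) / (m * γ + ms * g) ^ (m + ms) := by
        apply setIntegral_mono_on (hIlo x hx) (hIf x hx) measurableSet_Ioc
        intro γ hγ
        have hγ0 : 0 < γ := hγ.1
        apply div_le_div_of_nonneg_left (by positivity) (Real.rpow_pos_of_pos (by nlinarith) _)
        exact Real.rpow_le_rpow (by nlinarith) (by nlinarith [hγ.2]) (by linarith)
      rw [hevalc x hx _] at hle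
      have h2 := div_le_div_of_nonneg_right hle hxm.le
      calc c / (m * ((m * x + ms * g) ^ (m + ms)))
          = (c / (m * x + ms * g) ^ (m + ms) * (x ^ m / m)) / x ^ m := by
            field_simp
        _ ≤ _ := h2
    · have hle : (∫ γ in Ioc (0:ℝ) x, c * γ ^ (m - 1) / (m * γ + ms * g) ^ (m + ms)) ≤
          ∫ γ in Ioc (0:ℝ) x, c * γ ^ (m - 1) / (ms * g) ^ (m + ms) := by
        apply setIntegral_mono_on (hIf x hx) (hIhi x hx) measurableSet_Ioc
        intro γ hγ
        have hγ0 : 0 < γ := hγ.1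
        apply div_le_div_of_nonneg_left (by positivity) hmsgp
        exact Real.rpow_le_rpow hmsg.le (by nlinarith) (by linarith)
      rw [hevalc x hx _] at hle
      have h2 := div_le_div_of_nonneg_right hle hxm.le
      calc (∫ γ in Ioc (0:ℝ) x, c * γ ^ (m - 1) / (m * γ + ms * g) ^ (m + ms)) / x ^ m
          ≤ (c / (ms * g) ^ (m + ms) * (x ^ m / m)) / x ^ m := h2
        _ = c / (m * (ms * g) ^ (m + ms)) := by field_simp
  have hmem : ∀ᶠ x in nhdsWithin (0:ℝ) (Ioi 0), x ∈ Ioi (0:ℝ) :=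
    eventually_mem_nhdsWithin
  have hlow : Tendsto (fun x : ℝ => c / (m * ((m * x + ms * g) ^ (m + ms))))
      (nhdsWithin 0 (Ioi 0)) (nhds (c / (m * (ms * g) ^ (m + ms)))) := by
    have hca : ContinuousAt (fun x : ℝ => c / (m * ((m * x + ms * g) ^ (m + ms)))) 0 := by
      have hb : ContinuousAt (fun x : ℝ => m * x + ms * g) 0 := by fun_prop
      have hr : ContinuousAt (fun x : ℝ => (m * x + ms * g) ^ (m + ms)) 0 := by
        apply ContinuousAt.rpow_const hb
        left
        show m * 0 + ms * g ≠ 0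
        rw [mul_zero, zero_add]
        exact hmsg.ne'
      apply continuousAt_const.div (continuousAt_const.mul hr)
      show m * ((m * 0 + ms * g) ^ (m + ms)) ≠ 0
      rw [mul_zero, zero_add]
      exact (mul_pos hm (Real.rpow_pos_of_pos hmsg _)).ne'
    have h0 : (fun x : ℝ => c / (m * ((m * x + ms * g) ^ (m + ms)))) 0
        = c / (m * (ms * g) ^ (m + ms)) := by norm_num
    rw [← h0]
    exact hca.tendsto.mono_left nhdsWithin_le_nhds
  refine tendsto_of_tendsto_of_tendsto_of_le_of_le' hlow tendsto_const_nhds ?_ ?_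
  · filter_upwards [hmem] with x hx
    exact (key x hx).1
  · filter_upwards [hmem] with x hx
    exact (key x hx).2
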